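/- Let A = {0,1}, k = 2k'+1 odd, n ≥ k+1, n0 = n−k+1, and J = {n0, n0+2, …, n−2, n}. For every j ∈ J, the sequence of length-j suffixes of the terms of γ^{n,k} is 2^{j+1}-periodic. More precisely, for every j ∈ J with j ≠ n and every i ∈ [0, 2^n−1], writing μ = i mod 2^{j+1}, the suffix of length j of γ^{n,k}_{[i]} equals γ^{j, k−n+j}_{[μ]} if 0 ≤ μ ≤ 2^j−1, and equals ρ^{j, k−n+j}_{[μ−2^j]} if 2^j ≤ μ ≤ 2^{j+1}−1. -/

import Mathlib

/-- Hamming distance between two words (lists) of the same length: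
the number of positions in which they differ. -/
def hammingL {α : Type*} [DecidableEq α] (w w' : List α) : ℕ :=
  ((w.zip w').filter fun q => decide (q.1 ≠ q.2)).length

/-- `w` (restricted to indices `< N`) is a `σ_k`-Gray cycle over `X`:
its terms are pairwise distinct and enumerate `X` (a bijection from `[0, N-1]` onto `X`),
two consecutive terms have the same length and Hamming distance exactly `k`, and so do
the first and the last term. -/
def IsGrayCycleOn {α : Type*} [DecidableEq α] (k N : ℕ) (w : ℕ → List α)
    (X : Set (List α)) : Prop :=
  Set.BijOn w (Set.Iio N) X ∧
  (∀ i, 1 ≤ i → i < N →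
    (w (i - 1)).length = (w i).length ∧ hammingL (w (i - 1)) (w i) = k) ∧
  (0 < N → (w (N - 1)).length = (w 0).length ∧ hammingL (w (N - 1)) (w 0) = k)

/-- The bit complement `θ : 0 ↔ 1` on the binary alphabet `{0,1}`. -/
def cpl (x : Fin 2) : Fin 2 := x + 1

/-- The bit complement extended letterwise to binary words. -/
def cplW (w : List (Fin 2)) : List (Fin 2) := w.map cpl

/-- The reflected binary Gray code `g^{m,1}` over words of length `m`:
`g^{0,1} = (ε)` and `g^{m+1,1} = (0·g^{m,1}, 1·(g^{m,1})^R)`. -/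
def binGray : ℕ → List (List (Fin 2))
  | 0 => [[]]
  | m + 1 =>
      (binGray m).map (fun w => 0 :: w) ++ (binGray m).reverse.map (fun w => 1 :: w)

/-- The sequence `γ^{n0,1}`: `γ^{n0,1}_{[0]} = g^{n0,1}_{[0]}` and
`γ^{n0,1}_{[i]} = g^{n0,1}_{[2^{n0} - i]}` for `1 ≤ i ≤ 2^{n0} - 1`. -/
def gamma1 (n0 i : ℕ) : List (Fin 2) :=
  if i = 0 then (binGray n0).getD 0 [] else (binGray n0).getD (2 ^ n0 - i) []

/-- The sequence `ρ^{n0,1}`: `ρ^{n0,1}_{[0]} = g^{n0,1}_{[2^{n0}-1]}` and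
`ρ^{n0,1}_{[i]} = g^{n0,1}_{[i-1]}` for `1 ≤ i ≤ 2^{n0} - 1`. -/
def rho1 (n0 i : ℕ) : List (Fin 2) :=
  if i = 0 then (binGray n0).getD (2 ^ n0 - 1) [] else (binGray n0).getD (i - 1) []

/-- `grSeq n0 true t i` (resp. `grSeq n0 false t i`) is the term of index `i` of the
sequence `γ^{n0+2t, 2t+1}` (resp. `ρ^{n0+2t, 2t+1}`), built inductively: the base cases
are `γ^{n0,1}` and `ρ^{n0,1}`, and, writing `i = q·2^m + r` with `m = n0 + 2t` and
`r < 2^m`, `γ^{m+2, (2t+1)+2}_{[i]}` is `θ^r(00)·γ^{m,2t+1}_{[r]}`, `θ^r(01)·ρ^{m,2t+1}_{[r]}`,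
`θ^r(11)·γ^{m,2t+1}_{[r]}`, `θ^r(10)·ρ^{m,2t+1}_{[r]}` according to `q = 0, 1, 2, 3`, and
`ρ^{m+2, (2t+1)+2}_{[i]}` is `θ^r(10)·γ^{m,2t+1}_{[r]}`, `θ^r(11)·ρ^{m,2t+1}_{[r]}`,
`θ^r(01)·γ^{m,2t+1}_{[r]}`, `θ^r(00)·ρ^{m,2t+1}_{[r]}` according to `q = 0, 1, 2, 3`. -/
def grSeq (n0 : ℕ) : Bool → ℕ → ℕ → List (Fin 2)
  | b, 0, i => if b then gamma1 n0 i else rho1 n0 i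
  | b, t + 1, i =>
      cplW^[i % 2 ^ (n0 + 2 * t)]
        (if b then
          (if i / 2 ^ (n0 + 2 * t) = 0 then [0, 0]
           else if i / 2 ^ (n0 + 2 * t) = 1 then [0, 1]
           else if i / 2 ^ (n0 + 2 * t) = 2 then [1, 1] else [1, 0])
         else
          (if i / 2 ^ (n0 + 2 * t) = 0 then [1, 0]
           else if i / 2 ^ (n0 + 2 * t) = 1 then [1, 1]
           else if i / 2 ^ (n0 + 2 * t) = 2 then [0, 1] else [0, 0])) ++
        grSeq n0 (i / 2 ^ (n0 + 2 * t) % 2 == 0) t (i % 2 ^ (n0 + 2 * t))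

/-- For odd `k` and `n ≥ k + 1`, `gammaNK n k i` is the term `γ^{n,k}_{[i]}`
(here `n0 = n - k + 1` and `k = 2·(k/2) + 1`). -/
def gammaNK (n k i : ℕ) : List (Fin 2) := grSeq (n + 1 - k) true (k / 2) i

/-- For odd `k` and `n ≥ k + 1`, `rhoNK n k i` is the term `ρ^{n,k}_{[i]}`. -/
def rhoNK (n k i : ℕ) : List (Fin 2) := grSeq (n + 1 - k) false (k / 2) i

lemma cplW_iter_length (r : ℕ) (l : List (Fin 2)) : (cplW^[r] l).length = l.length := by
  induction r generalizing l with
  | zero => rfl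
  | succ r ih =>
      rw [Function.iterate_succ_apply, ih]
      simp [cplW]

lemma grSeq_succ_drop (n0 t : ℕ) (b : Bool) (i : ℕ) :
    (grSeq n0 b (t + 1) i).drop 2 =
      grSeq n0 (i / 2 ^ (n0 + 2 * t) % 2 == 0) t (i % 2 ^ (n0 + 2 * t)) := by
  rw [grSeq]
  apply List.drop_left'
  rw [cplW_iter_length]
  split_ifs <;> rfl

lemma grSeq_step (n0 t : ℕ) (b : Bool) (i : ℕ) :
    (grSeq n0 b (t + 1) i).drop 2 =
      if i % 2 ^ (n0 + 2 * t + 1) < 2 ^ (n0 + 2 * t) then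
        grSeq n0 true t (i % 2 ^ (n0 + 2 * t + 1))
      else grSeq n0 false t (i % 2 ^ (n0 + 2 * t + 1) - 2 ^ (n0 + 2 * t)) := by
  rw [grSeq_succ_drop]
  set M := 2 ^ (n0 + 2 * t) with hM
  have hMpos : 0 < M := Nat.pow_pos (by norm_num)
  have hpow : 2 ^ (n0 + 2 * t + 1) = M * 2 := by rw [pow_succ]
  have hmod : i % (M * 2) = i % M + M * (i / M % 2) := Nat.mod_mul
  rw [hpow]
  have hlt : i % M < M := Nat.mod_lt _ hMpos
  rcases Nat.mod_two_eq_zero_or_one (i / M) with hq | hq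
  · rw [hq] at hmod ⊢
    simp only [Nat.mul_zero, Nat.add_zero] at hmod
    rw [hmod, if_pos hlt]
    rfl
  · rw [hq] at hmod ⊢
    simp only [Nat.mul_one] at hmod
    rw [hmod, if_neg (by omega)]
    have : i % M + M - M = i % M := by omega
    rw [this]
    rfl

lemma grSeq_drop (n0 : ℕ) : ∀ t s (b : Bool) (i : ℕ), s < t →
    (grSeq n0 b t i).drop (2 * (t - s)) =
      if i % 2 ^ (n0 + 2 * s + 1) < 2 ^ (n0 + 2 * s) then
        grSeq n0 true s (i % 2 ^ (n0 + 2 * s + 1))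
      else grSeq n0 false s (i % 2 ^ (n0 + 2 * s + 1) - 2 ^ (n0 + 2 * s)) := by
  intro t
  induction t with
  | zero => intro s b i h; omega
  | succ t ih =>
      intro s b i hst
      rcases Nat.lt_succ_iff_lt_or_eq.mp hst with h | h
      · have h2 : 2 * (t + 1 - s) = 2 + 2 * (t - s) := by omega
        rw [h2, ← List.drop_drop, grSeq_succ_drop, ih s _ _ h]
        have hdvd : (2 : ℕ) ^ (n0 + 2 * s + 1) ∣ 2 ^ (n0 + 2 * t) :=
          pow_dvd_pow _ (by omega)
        rw [Nat.mod_mod_of_dvd _ hdvd]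
      · subst h
        have h2 : 2 * (s + 1 - s) = 2 := by omega
        rw [h2, grSeq_step]

/-- Let `k` be odd, `n ≥ k + 1`, `n0 = n - k + 1`, and `J = {n0, n0+2, …, n-2, n}`
(the `j` with `n0 ≤ j ≤ n` and `j ≡ n0 (mod 2)`). For every `j ∈ J` the sequence of
length-`j` suffixes of the terms of `γ^{n,k}` is `2^{j+1}`-periodic; more precisely, for
`j ∈ J` with `j ≠ n` and `i ∈ [0, 2^n - 1]`, writing `μ = i mod 2^{j+1}`, the suffix of
length `j` of `γ^{n,k}_{[i]}` is `γ^{j,k-n+j}_{[μ]}` if `μ < 2^j`, and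
`ρ^{j,k-n+j}_{[μ - 2^j]}` if `2^j ≤ μ < 2^{j+1}`. -/
theorem statement8 (n k : ℕ) (hk1 : 1 ≤ k) (hk : Odd k) (hn : k + 1 ≤ n) :
    ∀ j, n - k + 1 ≤ j → j ≤ n → (j - (n - k + 1)) % 2 = 0 →
      (∀ i, i + 2 ^ (j + 1) ≤ 2 ^ n - 1 →
        (gammaNK n k (i + 2 ^ (j + 1))).drop (n - j) = (gammaNK n k i).drop (n - j)) ∧
      (j ≠ n → ∀ i < 2 ^ n,
        (i % 2 ^ (j + 1) < 2 ^ j →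
          (gammaNK n k i).drop (n - j) = gammaNK j (k + j - n) (i % 2 ^ (j + 1))) ∧
        (2 ^ j ≤ i % 2 ^ (j + 1) →
          (gammaNK n k i).drop (n - j) =
            rhoNK j (k + j - n) (i % 2 ^ (j + 1) - 2 ^ j))) := by
  obtain ⟨t, ht⟩ := hk
  subst ht
  obtain ⟨m, hm, hm2⟩ : ∃ m, n = m + 2 * t ∧ 2 ≤ m := ⟨n - 2 * t, by omega, by omega⟩
  subst hm
  intro j hj1 hj2 hpar
  obtain ⟨s, hs⟩ : ∃ s, j = m + 2 * s := ⟨(j - m) / 2, by omega⟩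
  subst hs
  have e1 : gammaNK (m + 2 * t) (2 * t + 1) = grSeq m true t := by
    unfold gammaNK
    rw [show m + 2 * t + 1 - (2 * t + 1) = m from by omega,
        show (2 * t + 1) / 2 = t from by omega]
  constructor
  · intro i hi
    by_cases hsn : s = t
    · exfalso
      subst hsn
      have h1 : 1 ≤ 2 ^ (m + 2 * s) := Nat.one_le_two_pow
      have h2 : 2 ^ (m + 2 * s + 1) = 2 * 2 ^ (m + 2 * s) := by
        rw [pow_succ]; ring
      omega
    · have hlt : s < t := by omega
      have e2 : m + 2 * t - (m + 2 * s) = 2 * (t - s) := by omega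
      rw [e1, e2, grSeq_drop m t s true _ hlt, grSeq_drop m t s true i hlt,
          Nat.add_mod_right]
  · intro hjn i _
    have hlt : s < t := by omega
    have e2 : m + 2 * t - (m + 2 * s) = 2 * (t - s) := by omega
    have e3 : 2 * t + 1 + (m + 2 * s) - (m + 2 * t) = 2 * s + 1 := by omega
    constructor
    · intro hμ
      rw [e1, e2, grSeq_drop m t s true i hlt, if_pos hμ, e3]
      unfold gammaNK
      rw [show m + 2 * s + 1 - (2 * s + 1) = m from by omega,
          show (2 * s + 1) / 2 = s from by omega]
    · intro hμ
      rw [e1, e2, grSeq_drop m t s true i hlt, if_neg (by omega), e3]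
      unfold rhoNK
      rw [show m + 2 * s + 1 - (2 * s + 1) = m from by omega,
          show (2 * s + 1) / 2 = s from by omega]
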